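/- Let (T,d) be a compact metric space, m a Borel probability measure on T, φ a Young function with φ(1)=1, and R > 2. Then for all integers 0 ≤ c < l and every x ∈ T: Σ_{k=c}^{l-1} r^l_k(x) R^k ≤ (R²/((R−1)(R−2))) ∫_0^{r_c(x)} φ^{-1}(1/m(B(x,ε))) dε, where φ^{-1} is the generalized inverse of φ and the conventions 1/0 := ∞, φ^{-1}(∞) := ∞ are used. -/

import Mathlib

open MeasureTheory ENNReal Filter

noncomputable section

/-- A (finite) Young function: an increasing convex function `φ : [0,∞) → [0,∞)`
with `φ 0 = 0` and `φ x → ∞` as `x → ∞`. -/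
def IsYoungFunction (φ : ℝ → ℝ) : Prop :=
  MonotoneOn φ (Set.Ici 0) ∧ ConvexOn ℝ (Set.Ici 0) φ ∧ φ 0 = 0 ∧
    Tendsto φ atTop atTop

/-- Generalized inverse of a Young function, as a map `ℝ≥0∞ → ℝ≥0∞`
(so that in particular `φ⁻¹(∞) = ∞`). -/
def yinv (φ : ℝ → ℝ) (y : ℝ≥0∞) : ℝ≥0∞ :=
  sInf {x : ℝ≥0∞ | ∃ r : ℝ, 0 ≤ r ∧ x = ENNReal.ofReal r ∧ y ≤ ENNReal.ofReal (φ r)}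

/-- The minorizing metric
`τ_{m,φ}(s,t) = max_{x ∈ {s,t}} ∫_0^{d(s,t)} φ⁻¹(1 / m(B(x,ε))) dε`,
with the conventions `1/0 = ∞`, `φ⁻¹(∞) = ∞`. -/
def tauDist {T : Type*} [MetricSpace T] [MeasurableSpace T]
    (m : Measure T) (φ : ℝ → ℝ) (s t : T) : ℝ≥0∞ :=
  max (∫⁻ ε in Set.Ioc (0 : ℝ) (dist s t), yinv φ (1 / m (Metric.closedBall s ε)))
    (∫⁻ ε in Set.Ioc (0 : ℝ) (dist s t), yinv φ (1 / m (Metric.closedBall t ε)))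

/-- `f^d(u,v) = |f(u) - f(v)| / d(u,v)`, equal to `0` on the diagonal. -/
def fdiv {T : Type*} [MetricSpace T] (f : T → ℝ) (p : T × T) : ℝ :=
  |f p.1 - f p.2| / dist p.1 p.2

/-- The Luxemburg norm `|g|^ν_χ = inf {a > 0 : ∫ χ(|g|/a) dν ≤ 1}`, with value `∞`
if no such `a` exists. -/
def luxNorm {X : Type*} [MeasurableSpace X] (ν : Measure X) (χ : ℝ → ℝ)
    (g : X → ℝ) : ℝ≥0∞ :=
  sInf {a : ℝ≥0∞ | ∃ b : ℝ, 0 < b ∧ a = ENNReal.ofReal b ∧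
    ∫⁻ u, ENNReal.ofReal (χ (|g u| / b)) ∂ν ≤ 1}

/-- The Amemiya norm `‖g‖^μ_χ = inf_{a>0} a (1 + ∫ χ(|g|/a) dμ)`. -/
def amemiyaNorm {X : Type*} [MeasurableSpace X] (μ : Measure X) (χ : ℝ → ℝ)
    (g : X → ℝ) : ℝ≥0∞ :=
  sInf {c : ℝ≥0∞ | ∃ a : ℝ, 0 < a ∧
    c = ENNReal.ofReal a * (1 + ∫⁻ u, ENNReal.ofReal (χ (|g u| / a)) ∂μ)}

/-- `r_0(x) = D(T)` and, for `k ≥ 1`,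
`r_k(x) = min {ε ≥ 0 : 1 / m(B(x,ε)) ≤ φ(R^k)}` (with `1/0 = ∞`). -/
def rad {T : Type*} [MetricSpace T] [MeasurableSpace T]
    (m : Measure T) (φ : ℝ → ℝ) (R : ℝ) : ℕ → T → ℝ
  | 0, _ => Metric.diam (Set.univ : Set T)
  | k + 1, x => sInf {ε : ℝ | 0 ≤ ε ∧
      1 / m (Metric.closedBall x ε) ≤ ENNReal.ofReal (φ (R ^ (k + 1)))}

/-- `r^l_k(x) = ∑_{i=k}^{l} 2^(i-k) r_i(x)`. -/
def radl {T : Type*} [MetricSpace T] [MeasurableSpace T]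
    (m : Measure T) (φ : ℝ → ℝ) (R : ℝ) (k l : ℕ) (x : T) : ℝ :=
  ∑ i ∈ Finset.Icc k l, (2 : ℝ) ^ (i - k) * rad m φ R i x

/-- The averaging operator `S_k f (x) = (1 / m(B_k(x))) ∫_{B_k(x)} f dm`,
with the convention `0/0 = 0`. -/
def avg {T : Type*} [MetricSpace T] [MeasurableSpace T]
    (m : Measure T) (φ : ℝ → ℝ) (R : ℝ) (k : ℕ) (f : T → ℝ) (x : T) : ℝ :=
  (∫ u in Metric.closedBall x (rad m φ R k x), f u ∂m) /
    (m (Metric.closedBall x (rad m φ R k x))).toReal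

/-- The iterated averaging operator `iterAvg k l f = S_l S_{l-1} ⋯ S_k f` (for `k ≤ l`). -/
def iterAvg {T : Type*} [MetricSpace T] [MeasurableSpace T]
    (m : Measure T) (φ : ℝ → ℝ) (R : ℝ) (k : ℕ) : ℕ → (T → ℝ) → T → ℝ
  | 0, f => avg m φ R 0 f
  | l + 1, f =>
      if l + 1 ≤ k then avg m φ R (l + 1) f
      else avg m φ R (l + 1) (iterAvg m φ R k l f)

/-- The set `{k ≥ 1 : B^l_k(s) ∪ B^l_k(t) ⊆ B°(u, r_{k-1}(u)) for every u ∈ B^l_k(x)}`,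
whose greatest element is `τ_x`. -/
def tauSet {T : Type*} [MetricSpace T] [MeasurableSpace T]
    (m : Measure T) (φ : ℝ → ℝ) (R : ℝ) (l : ℕ) (s t x : T) : Set ℕ :=
  {k : ℕ | 1 ≤ k ∧ ∀ u ∈ Metric.closedBall x (radl m φ R k l x),
    Metric.closedBall s (radl m φ R k l s) ∪ Metric.closedBall t (radl m φ R k l t) ⊆
      Metric.ball u (rad m φ R (k - 1) u)}


namespace St16Aux

variable {R : ℝ} {r : ℕ → ℝ}

def rl (r : ℕ → ℝ) (k l : ℕ) : ℝ := ∑ i ∈ Finset.Icc k l, (2 : ℝ) ^ (i - k) * r i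

lemma rl_split (r : ℕ → ℝ) {c l : ℕ} (hcl : c ≤ l) :
    rl r c l = r c + 2 * rl r (c + 1) l := by
  unfold rl
  rw [← Finset.Ico_add_one_right_eq_Icc, Finset.sum_eq_sum_Ico_succ_bot (by omega : c < l + 1),
    Nat.sub_self, pow_zero, one_mul]
  congr 1
  rw [Finset.mul_sum, Finset.Ico_add_one_right_eq_Icc]
  apply Finset.sum_congr rfl
  intro i hi
  have h1 : c + 1 ≤ i := (Finset.mem_Icc.mp hi).1
  have h2 : i - c = (i - (c + 1)) + 1 := by omega
  rw [h2, pow_succ]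
  ring

lemma I1 (R : ℝ) (r : ℕ → ℝ) (n : ℕ) : ∀ c : ℕ,
    (R - 2) * (∑ k ∈ Finset.Icc c (c + n), rl r k (c + n) * R ^ k) +
      2 * R ^ c * rl r c (c + n) = R * ∑ i ∈ Finset.Icc c (c + n), R ^ i * r i := by
  induction n with
  | zero =>
    intro c
    simp only [Nat.add_zero, Finset.Icc_self, Finset.sum_singleton]
    have : rl r c c = r c := by
      unfold rl; simp
    rw [this]; ring
  | succ n ih =>
    intro c
    have e : c + (n + 1) = (c + 1) + n := by omega
    rw [e]
    rw [← Finset.Ico_add_one_right_eq_Icc, Finset.sum_eq_sum_Ico_succ_bot (by omega : c < (c+1)+n+1),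
      Finset.sum_eq_sum_Ico_succ_bot (f := fun i => R ^ i * r i) (by omega : c < (c+1)+n+1),
      Finset.Ico_add_one_right_eq_Icc]
    rw [rl_split r (by omega : c ≤ (c + 1) + n)]
    have := ih (c + 1)
    rw [rl_split r (by omega : c + 1 ≤ (c + 1) + n)] at this ⊢
    -- this : (R-2) * Σ_{Icc (c+1) ((c+1)+n)} rl k * R^k + 2 R^{c+1} (r(c+1) + 2 rl (c+2)) = R Σ
    linear_combination this

lemma I2 (R : ℝ) (r : ℕ → ℝ) (n : ℕ) : ∀ c : ℕ,
    R * (R ^ (c + n) * r (c + n) +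
        ∑ j ∈ Finset.Ico c (c + n), R ^ j * (r j - r (j + 1))) =
      (R - 1) * ∑ i ∈ Finset.Icc c (c + n), R ^ i * r i + R ^ c * r c := by
  induction n with
  | zero =>
    intro c
    simp only [Nat.add_zero, Finset.Ico_self, Finset.sum_empty, add_zero,
      Finset.Icc_self, Finset.sum_singleton]
    ring
  | succ n ih =>
    intro c
    have e : c + (n + 1) = (c + 1) + n := by omega
    rw [e]
    rw [Finset.sum_eq_sum_Ico_succ_bot (by omega : c < (c+1)+n)]
    rw [← Finset.Ico_add_one_right_eq_Icc, Finset.sum_eq_sum_Ico_succ_bot (f := fun i => R ^ i * r i)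
      (by omega : c < (c+1)+n+1), Finset.Ico_add_one_right_eq_Icc]
    linear_combination ih (c + 1)


lemma rl_nonneg {r : ℕ → ℝ} (hr : ∀ i, 0 ≤ r i) (k l : ℕ) : 0 ≤ rl r k l :=
  Finset.sum_nonneg fun i _ => mul_nonneg (by positivity) (hr i)

lemma real_ineq (hR : 2 < R) (r : ℕ → ℝ) (hr : ∀ i, 0 ≤ r i) {c l : ℕ} (hcl : c ≤ l) :
    ∑ k ∈ Finset.Ico c l, rl r k l * R ^ k ≤
      R ^ 2 / ((R - 1) * (R - 2)) *
        (R ^ l * r l + ∑ j ∈ Finset.Ico c l, R ^ j * (r j - r (j + 1))) := by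
  have h1 := I1 R r (l - c) c
  have h2 := I2 R r (l - c) c
  rw [show c + (l - c) = l from by omega] at h1 h2
  have hM : ∑ k ∈ Finset.Icc c l, rl r k l * R ^ k =
      (∑ k ∈ Finset.Ico c l, rl r k l * R ^ k) + rl r l l * R ^ l := by
    rw [← Finset.Ico_add_one_right_eq_Icc, Finset.sum_Ico_succ_top hcl]
  set A := ∑ k ∈ Finset.Ico c l, rl r k l * R ^ k with hA
  set B := R ^ l * r l + ∑ j ∈ Finset.Ico c l, R ^ j * (r j - r (j + 1)) with hB
  have hkey : (R - 1) * (R - 2) * A =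
      R ^ 2 * B - 2 * (R - 1) * (R ^ c * rl r c l)
        - (R - 1) * (R - 2) * (rl r l l * R ^ l) - R * (R ^ c * r c) := by
    linear_combination (R - 1) * h1 - R * h2 - (R - 1) * (R - 2) * hM
  have q1 : 0 ≤ 2 * (R - 1) * (R ^ c * rl r c l) :=
    mul_nonneg (by linarith) (mul_nonneg (pow_nonneg (by linarith) c) (rl_nonneg hr c l))
  have q2 : 0 ≤ (R - 1) * (R - 2) * (rl r l l * R ^ l) :=
    mul_nonneg (mul_nonneg (by linarith) (by linarith))
      (mul_nonneg (rl_nonneg hr l l) (pow_nonneg (by linarith) l))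
  have q3 : 0 ≤ R * (R ^ c * r c) :=
    mul_nonneg (by linarith) (mul_nonneg (pow_nonneg (by linarith) c) (hr c))
  have hd : 0 < (R - 1) * (R - 2) := by nlinarith
  rw [div_mul_eq_mul_div, le_div_iff₀ hd]
  nlinarith [hkey, q1, q2, q3]

variable {T : Type} [MetricSpace T] [CompactSpace T] [MeasurableSpace T] [BorelSpace T]


variable {T : Type} [MetricSpace T] [CompactSpace T] [MeasurableSpace T] [BorelSpace T]
variable {m : Measure T} {φ : ℝ → ℝ} {R : ℝ}

lemma phi_mono (hφ : IsYoungFunction φ) {a b : ℝ} (ha : 0 ≤ a) (hab : a ≤ b) :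
    φ a ≤ φ b := hφ.1 (Set.mem_Ici.mpr ha) (Set.mem_Ici.mpr (ha.trans hab)) hab

lemma one_le_phi (hφ : IsYoungFunction φ) (hφ1 : φ 1 = 1) {r : ℝ} (hr : 1 ≤ r) :
    1 ≤ φ r := by
  have := phi_mono hφ zero_le_one hr
  rw [hφ1] at this; exact this

lemma one_le_of_one_le_phi (hφ : IsYoungFunction φ) (hφ1 : φ 1 = 1) {r : ℝ}
    (hr0 : 0 ≤ r) (h : 1 ≤ φ r) : 1 ≤ r := by
  by_contra hlt
  push_neg at hlt
  have hconv := hφ.2.1.2 (Set.self_mem_Ici) (Set.mem_Ici.mpr zero_le_one)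
      (by linarith : (0:ℝ) ≤ 1 - r) hr0 (by ring)
  simp only [smul_eq_mul, mul_zero, mul_one, zero_add, hφ.2.2.1, hφ1] at hconv
  linarith

lemma le_yinv (hφ : IsYoungFunction φ) {y : ℝ≥0∞} {b : ℝ}
    (h : ∀ r : ℝ, 0 ≤ r → y ≤ ENNReal.ofReal (φ r) → b ≤ r) :
    ENNReal.ofReal b ≤ yinv φ y := by
  apply le_sInf
  rintro x ⟨r, hr0, rfl, hyr⟩
  exact ENNReal.ofReal_le_ofReal (h r hr0 hyr)

lemma one_le_yinv (hφ : IsYoungFunction φ) (hφ1 : φ 1 = 1) {y : ℝ≥0∞} (hy : 1 ≤ y) :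
    1 ≤ yinv φ y := by
  rw [← ENNReal.ofReal_one]
  exact le_yinv hφ fun r hr0 hyr =>
    one_le_of_one_le_phi hφ hφ1 hr0 (ENNReal.one_le_ofReal.mp (hy.trans hyr))

lemma univ_subset_closedBall (x : T) :
    (Set.univ : Set T) ⊆ Metric.closedBall x (Metric.diam (Set.univ : Set T)) :=
  fun y _ => Metric.mem_closedBall.mpr
    (Metric.dist_le_diam_of_mem isCompact_univ.isBounded trivial trivial)

lemma m_closedBall_diam (hm : IsProbabilityMeasure m) (x : T) :
    m (Metric.closedBall x (Metric.diam (Set.univ : Set T))) = 1 := by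
  refine le_antisymm prob_le_one ?_
  rw [← measure_univ (μ := m)]
  exact measure_mono (univ_subset_closedBall x)

lemma diam_mem (hm : IsProbabilityMeasure m) (hφ : IsYoungFunction φ) (hφ1 : φ 1 = 1)
    (hR : 2 < R) (x : T) (k : ℕ) :
    Metric.diam (Set.univ : Set T) ∈ {ε : ℝ | 0 ≤ ε ∧
      1 / m (Metric.closedBall x ε) ≤ ENNReal.ofReal (φ (R ^ (k + 1)))} := by
  refine ⟨Metric.diam_nonneg, ?_⟩
  rw [m_closedBall_diam hm x]
  simp only [div_one]
  exact ENNReal.one_le_ofReal.mpr (one_le_phi hφ hφ1 (one_le_pow₀ (by linarith)))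

lemma rad_nonneg (k : ℕ) (x : T) : 0 ≤ rad m φ R k x := by
  cases k with
  | zero => exact Metric.diam_nonneg
  | succ k => exact Real.sInf_nonneg fun ε hε => hε.1

lemma radl_nonneg (k l : ℕ) (x : T) : 0 ≤ radl m φ R k l x :=
  Finset.sum_nonneg fun i _ => mul_nonneg (by positivity) (rad_nonneg i x)

lemma rad_le_diam (hm : IsProbabilityMeasure m) (hφ : IsYoungFunction φ) (hφ1 : φ 1 = 1)
    (hR : 2 < R) (k : ℕ) (x : T) :
    rad m φ R k x ≤ Metric.diam (Set.univ : Set T) := by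
  cases k with
  | zero => exact le_rfl
  | succ k => exact csInf_le ⟨0, fun ε hε => hε.1⟩ (diam_mem hm hφ hφ1 hR x k)

lemma rad_succ_le (hm : IsProbabilityMeasure m) (hφ : IsYoungFunction φ) (hφ1 : φ 1 = 1)
    (hR : 2 < R) (k : ℕ) (x : T) :
    rad m φ R (k + 1) x ≤ rad m φ R k x := by
  cases k with
  | zero => exact rad_le_diam hm hφ hφ1 hR 1 x
  | succ k =>
    refine csInf_le_csInf ⟨0, fun ε hε => hε.1⟩ ⟨_, diam_mem hm hφ hφ1 hR x k⟩ ?_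
    intro ε hε
    refine ⟨hε.1, hε.2.trans (ENNReal.ofReal_le_ofReal ?_)⟩
    exact phi_mono hφ (by positivity) (pow_le_pow_right₀ (by linarith) (by omega))

lemma key (hm : IsProbabilityMeasure m) (hφ : IsYoungFunction φ) (hφ1 : φ 1 = 1)
    (hR : 2 < R) (k : ℕ) (x : T) {ε : ℝ} (hε0 : 0 < ε) (hεr : ε < rad m φ R k x) :
    ENNReal.ofReal (R ^ k) ≤ yinv φ (1 / m (Metric.closedBall x ε)) := by
  cases k with
  | zero =>
    rw [pow_zero, ENNReal.ofReal_one]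
    apply one_le_yinv hφ hφ1
    rw [one_div]
    simpa using ENNReal.inv_le_inv.mpr (prob_le_one (μ := m) (s := Metric.closedBall x ε))
  | succ k =>
    have hbdd : BddBelow {ε : ℝ | 0 ≤ ε ∧
        1 / m (Metric.closedBall x ε) ≤ ENNReal.ofReal (φ (R ^ (k + 1)))} :=
      ⟨0, fun a ha => ha.1⟩
    have hnot : ¬ (1 / m (Metric.closedBall x ε) ≤ ENNReal.ofReal (φ (R ^ (k + 1)))) := by
      intro h
      exact absurd (csInf_le hbdd ⟨hε0.le, h⟩) (not_le.mpr hεr)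
    apply le_yinv hφ
    intro r hr0 hyr
    have hlt : ENNReal.ofReal (φ (R ^ (k + 1))) < ENNReal.ofReal (φ r) :=
      lt_of_lt_of_le (not_le.mp hnot) hyr
    by_contra hc
    push_neg at hc
    exact absurd (ENNReal.ofReal_le_ofReal (phi_mono hφ hr0 hc.le)) (not_le.mpr hlt)

lemma chunk (hm : IsProbabilityMeasure m) (hφ : IsYoungFunction φ) (hφ1 : φ 1 = 1)
    (hR : 2 < R) (k : ℕ) (x : T) {a : ℝ} (ha : 0 ≤ a) :
    ENNReal.ofReal (R ^ k) * ENNReal.ofReal (rad m φ R k x - a) ≤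
      ∫⁻ ε in Set.Ioc a (rad m φ R k x), yinv φ (1 / m (Metric.closedBall x ε)) := by
  calc ENNReal.ofReal (R ^ k) * ENNReal.ofReal (rad m φ R k x - a)
      = ∫⁻ _ in Set.Ioo a (rad m φ R k x), ENNReal.ofReal (R ^ k) := by
        rw [setLIntegral_const, Real.volume_Ioo]
    _ ≤ ∫⁻ ε in Set.Ioo a (rad m φ R k x), yinv φ (1 / m (Metric.closedBall x ε)) :=
        setLIntegral_mono' measurableSet_Ioo fun ε hε =>
          key hm hφ hφ1 hR k x (lt_of_le_of_lt ha hε.1) hε.2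
    _ ≤ _ := lintegral_mono_set Set.Ioo_subset_Ioc_self

lemma Hmain (hm : IsProbabilityMeasure m) (hφ : IsYoungFunction φ) (hφ1 : φ 1 = 1)
    (hR : 2 < R) (n : ℕ) : ∀ (c : ℕ) (x : T),
    ENNReal.ofReal (R ^ (c + n)) * ENNReal.ofReal (rad m φ R (c + n) x) +
      ∑ j ∈ Finset.Ico c (c + n),
        ENNReal.ofReal (R ^ j) * ENNReal.ofReal (rad m φ R j x - rad m φ R (j + 1) x) ≤
      ∫⁻ ε in Set.Ioc (0 : ℝ) (rad m φ R c x), yinv φ (1 / m (Metric.closedBall x ε)) := by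
  induction n with
  | zero =>
    intro c x
    simp only [Nat.add_zero, Finset.Ico_self, Finset.sum_empty, add_zero]
    have := chunk hm hφ hφ1 hR c x (le_refl (0:ℝ))
    rwa [sub_zero] at this
  | succ n ih =>
    intro c x
    have e : c + (n + 1) = (c + 1) + n := by omega
    rw [e]
    have hsplit : Set.Ioc (0 : ℝ) (rad m φ R c x) =
        Set.Ioc 0 (rad m φ R (c + 1) x) ∪ Set.Ioc (rad m φ R (c + 1) x) (rad m φ R c x) :=
      (Set.Ioc_union_Ioc_eq_Ioc (rad_nonneg (c + 1) x) (rad_succ_le hm hφ hφ1 hR c x)).symm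
    rw [hsplit, lintegral_union measurableSet_Ioc (Set.Ioc_disjoint_Ioc_of_le le_rfl)]
    rw [Finset.sum_eq_sum_Ico_succ_bot (by omega : c < (c + 1) + n)]
    have goal_eq : ENNReal.ofReal (R ^ ((c + 1) + n)) * ENNReal.ofReal (rad m φ R ((c + 1) + n) x) +
        (ENNReal.ofReal (R ^ c) * ENNReal.ofReal (rad m φ R c x - rad m φ R (c + 1) x) +
          ∑ j ∈ Finset.Ico (c + 1) ((c + 1) + n),
            ENNReal.ofReal (R ^ j) * ENNReal.ofReal (rad m φ R j x - rad m φ R (j + 1) x)) =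
        (ENNReal.ofReal (R ^ ((c + 1) + n)) * ENNReal.ofReal (rad m φ R ((c + 1) + n) x) +
          ∑ j ∈ Finset.Ico (c + 1) ((c + 1) + n),
            ENNReal.ofReal (R ^ j) * ENNReal.ofReal (rad m φ R j x - rad m φ R (j + 1) x)) +
          ENNReal.ofReal (R ^ c) * ENNReal.ofReal (rad m φ R c x - rad m φ R (c + 1) x) := by
      ring
    rw [goal_eq]
    exact add_le_add (ih (c + 1) x) (chunk hm hφ hφ1 hR c x (rad_nonneg (c + 1) x))


end St16Aux

open St16Aux in
/-- inequality (2.6) of the paper. -/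
theorem statement16 (T : Type) [MetricSpace T] [CompactSpace T]
    [MeasurableSpace T] [BorelSpace T]
    (m : Measure T) (hm : IsProbabilityMeasure m)
    (φ : ℝ → ℝ) (hφ : IsYoungFunction φ) (hφ1 : φ 1 = 1)
    (R : ℝ) (hR : 2 < R) :
    ∀ c l : ℕ, c < l → ∀ x : T,
      ENNReal.ofReal (∑ k ∈ Finset.Ico c l, radl m φ R k l x * R ^ k) ≤
        ENNReal.ofReal (R ^ 2 / ((R - 1) * (R - 2))) *
          ∫⁻ ε in Set.Ioc (0 : ℝ) (rad m φ R c x),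
            yinv φ (1 / m (Metric.closedBall x ε)) := by
  intro c l hcl x
  have hR0 : (0:ℝ) ≤ R := by linarith
  have h0 := Hmain hm hφ hφ1 hR (l - c) c x
  rw [show c + (l - c) = l from by omega] at h0
  have hterm : ∀ j ∈ Finset.Ico c l,
      0 ≤ R ^ j * (rad m φ R j x - rad m φ R (j + 1) x) := fun j _ =>
    mul_nonneg (pow_nonneg hR0 j) (sub_nonneg.mpr (rad_succ_le hm hφ hφ1 hR j x))
  have hBle : ENNReal.ofReal (R ^ l * rad m φ R l x +
      ∑ j ∈ Finset.Ico c l, R ^ j * (rad m φ R j x - rad m φ R (j + 1) x)) ≤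
      ∫⁻ ε in Set.Ioc (0 : ℝ) (rad m φ R c x),
        yinv φ (1 / m (Metric.closedBall x ε)) := by
    rw [ENNReal.ofReal_add (mul_nonneg (pow_nonneg hR0 l) (rad_nonneg l x))
        (Finset.sum_nonneg hterm),
      ENNReal.ofReal_mul (pow_nonneg hR0 l), ENNReal.ofReal_sum_of_nonneg hterm]
    have hsum : ∑ j ∈ Finset.Ico c l,
        ENNReal.ofReal (R ^ j * (rad m φ R j x - rad m φ R (j + 1) x)) =
        ∑ j ∈ Finset.Ico c l, ENNReal.ofReal (R ^ j) *
          ENNReal.ofReal (rad m φ R j x - rad m φ R (j + 1) x) :=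
      Finset.sum_congr rfl fun j _ => ENNReal.ofReal_mul (pow_nonneg hR0 j)
    rw [hsum]
    exact h0
  have hreal : (∑ k ∈ Finset.Ico c l, radl m φ R k l x * R ^ k) ≤
      R ^ 2 / ((R - 1) * (R - 2)) * (R ^ l * rad m φ R l x +
        ∑ j ∈ Finset.Ico c l, R ^ j * (rad m φ R j x - rad m φ R (j + 1) x)) :=
    real_ineq hR (fun i => rad m φ R i x) (fun i => rad_nonneg i x) hcl.le
  have hC : (0:ℝ) ≤ R ^ 2 / ((R - 1) * (R - 2)) :=
    div_nonneg (by positivity) (by nlinarith)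
  calc ENNReal.ofReal (∑ k ∈ Finset.Ico c l, radl m φ R k l x * R ^ k)
      ≤ ENNReal.ofReal (R ^ 2 / ((R - 1) * (R - 2)) * (R ^ l * rad m φ R l x +
          ∑ j ∈ Finset.Ico c l, R ^ j * (rad m φ R j x - rad m φ R (j + 1) x))) :=
        ENNReal.ofReal_le_ofReal hreal
    _ = ENNReal.ofReal (R ^ 2 / ((R - 1) * (R - 2))) *
          ENNReal.ofReal (R ^ l * rad m φ R l x +
            ∑ j ∈ Finset.Ico c l, R ^ j * (rad m φ R j x - rad m φ R (j + 1) x)) :=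
        ENNReal.ofReal_mul hC
    _ ≤ _ := mul_le_mul_right hBle _
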